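/- (Brown's Decomposition) Let α ∈ (0,1) be irrational with continuants q₀, q₁, …, and let m be a positive integer with greedy (Ostrowski) expansion m = z_t q_t + z_{t−1} q_{t−1} + ⋯ + z₀ q₀. Then C_m = (C_{q_t})^{z_t} ⬝ (C_{q_{t−1}})^{z_{t−1}} ⬝ ⋯ ⬝ (C_{q_0})^{z_0}. -/

import Mathlib

/-- The characteristic sequence of `α`: `c_k = ⌊(k+1)α⌋ - ⌊kα⌋`. -/
noncomputable def cseq (α : ℝ) (k : ℕ) : ℤ := ⌊((k : ℝ) + 1) * α⌋ - ⌊(k : ℝ) * α⌋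

/-- The word `C_m = c₁c₂⋯c_m`. -/
noncomputable def cword (α : ℝ) (m : ℕ) : List ℤ := (List.range m).map fun j => cseq α (j + 1)

namespace BrownAux

noncomputable def pnum (a : ℕ → ℕ) : ℕ → ℤ
  | 0 => 0
  | 1 => 1
  | (n+2) => (a (n+2) : ℤ) * pnum a (n+1) + pnum a n

section

variable {α : ℝ} {a : ℕ → ℕ} {x : ℕ → ℝ} {q : ℕ → ℕ}
variable (hirr : Irrational α) (h0 : 0 < α) (h1 : α < 1)
  (hx0 : x 0 = α) (ha : ∀ i, (a (i + 1) : ℤ) = ⌊1 / x i⌋)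
  (hx : ∀ i, x (i + 1) = 1 / x i - (a (i + 1) : ℝ))
  (hq0 : q 0 = 1) (hq1 : q 1 = a 1)
  (hqr : ∀ i, q (i + 2) = a (i + 2) * q (i + 1) + q i)

include hirr h0 h1 hx0 ha hx in
theorem xprop : ∀ k, Irrational (x k) ∧ 0 < x k ∧ x k < 1 := by
  intro k
  induction k with
  | zero => exact ⟨hx0 ▸ hirr, hx0 ▸ h0, hx0 ▸ h1⟩
  | succ k ih =>
    obtain ⟨hi, hp, hl⟩ := ih
    have hinv : Irrational (1 / x k) := by
      simpa [one_div] using hi.inv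
    have hfr : x (k+1) = Int.fract (1 / x k) := by
      rw [hx k, Int.fract]
      congr 1
      exact_mod_cast congrArg (fun z : ℤ => (z : ℝ)) (ha k)
    have hIrr : Irrational (x (k+1)) := by
      rw [hfr, Int.fract]
      exact hinv.sub_intCast _
    refine ⟨hIrr, ?_, ?_⟩
    · have hnn : (0:ℝ) ≤ x (k+1) := by rw [hfr]; exact Int.fract_nonneg _
      rcases hnn.lt_or_eq with h | h
      · exact h
      · exact absurd (h ▸ hIrr) (by simp [Irrational])
    · rw [hfr]; exact Int.fract_lt_one _

include hirr h0 h1 hx0 ha hx in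
theorem a_pos : ∀ k, 1 ≤ a (k + 1) := by
  intro k
  obtain ⟨hi, hp, hl⟩ := xprop hirr h0 h1 hx0 ha hx k
  have h1x : (1:ℝ) ≤ 1 / x k := by
    rw [le_div_iff₀ hp]; linarith
  have : (1:ℤ) ≤ ⌊1 / x k⌋ := by
    exact_mod_cast Int.le_floor.mpr (by exact_mod_cast h1x)
  have := ha k ▸ this
  exact_mod_cast this

include hirr h0 h1 hx0 ha hx hq0 hq1 hqr in
theorem q_pos : ∀ k, 1 ≤ q k := by
  have hA := a_pos hirr h0 h1 hx0 ha hx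
  intro k
  induction k using Nat.twoStepInduction with
  | zero => omega
  | one => rw [hq1]; exact hA 0
  | more n ih1 ih2 => rw [hqr n]; nlinarith [hA (n+1)]

include hirr h0 h1 hx0 ha hx hq0 hq1 hqr in
theorem theta_eq : ∀ k, (q k : ℝ) * α - (pnum a k : ℝ) =
    (-1:ℝ)^k * ∏ i ∈ Finset.range (k+1), x i := by
  have hX := xprop hirr h0 h1 hx0 ha hx
  have hxa : ∀ i, (a (i+1) : ℝ) = ((⌊1 / x i⌋ : ℤ) : ℝ) := fun i => by exact_mod_cast ha i
  intro k
  induction k using Nat.twoStepInduction with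
  | zero => simp [hq0, pnum, hx0]
  | one =>
    have hne : x 0 ≠ 0 := ne_of_gt (hX 0).2.1
    have h01 : x 1 = 1 / x 0 - (a 1 : ℝ) := hx 0
    simp only [hq1, pnum, Finset.prod_range_succ, Finset.prod_range_one, pow_one]
    rw [hx0] at hne h01 ⊢
    field_simp [h01]
    rw [h01]; simp only [Finset.prod_range_zero, mul_one, Nat.cast_one, mul_sub, mul_one_div_cancel hne]; ring
  | more n ih1 ih2 =>
    have hne : x (n+1) ≠ 0 := ne_of_gt (hX (n+1)).2.1
    have hrec : x (n+1) * x (n+2) = 1 - (a (n+2) : ℝ) * x (n+1) := by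
      rw [show n+2 = (n+1)+1 from rfl, hx (n+1)]; field_simp
    have hq' : ((q (n+2) : ℝ)) = (a (n+2) : ℝ) * (q (n+1) : ℝ) + (q n : ℝ) := by
      rw [hqr n]; push_cast; ring
    have hp' : ((pnum a (n+2) : ℝ)) = (a (n+2) : ℝ) * (pnum a (n+1) : ℝ) + (pnum a n : ℝ) := by
      show ((((a (n+2) : ℤ) * pnum a (n+1) + pnum a n) : ℤ) : ℝ) = _
      push_cast; ring
    rw [hq', hp', Finset.prod_range_succ, Finset.prod_range_succ]
    rw [Finset.prod_range_succ] at ih2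
    linear_combination (a (n+2):ℝ) * ih2 + ih1 - (-1:ℝ)^n * (∏ i ∈ Finset.range (n+1), x i) * hrec

omit h0 in include hq0 hqr in
theorem det_eq : ∀ k, pnum a (k+1) * (q k : ℤ) - pnum a k * (q (k+1) : ℤ) = (-1:ℤ)^k := by
  intro k
  induction k with
  | zero => simp [hq0, pnum]
  | succ n ih =>
    have : pnum a (n+2) = (a (n+2) : ℤ) * pnum a (n+1) + pnum a n := rfl
    rw [this, hqr n, pow_succ]
    push_cast
    linarith [ih]

include hirr h0 h1 hx0 ha hx in
theorem prodX_pos : ∀ k, 0 < ∏ i ∈ Finset.range (k+1), x i := by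
  intro k
  exact Finset.prod_pos fun l _ => (xprop hirr h0 h1 hx0 ha hx l).2.1

include hirr h0 h1 hx0 ha hx hq0 hq1 hqr in
theorem oneid : ∀ k, (q (k+1):ℝ) * (∏ i ∈ Finset.range (k+1), x i)
    + (q k:ℝ) * (∏ i ∈ Finset.range (k+2), x i) = 1 := by
  intro k
  have t1 := theta_eq hirr h0 h1 hx0 ha hx hq0 hq1 hqr k
  have t2 := theta_eq hirr h0 h1 hx0 ha hx hq0 hq1 hqr (k+1)
  have d : ((pnum a (k+1) : ℝ) * (q k:ℝ) - (pnum a k : ℝ) * (q (k+1):ℝ)) = (-1:ℝ)^k := by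
    exact_mod_cast congrArg (fun z : ℤ => (z:ℝ)) (det_eq hq0 hqr k)
  rcases Nat.even_or_odd k with hk | hk
  · rw [hk.neg_one_pow] at t1 d
    rw [hk.add_one.neg_one_pow] at t2
    linear_combination (-(q (k+1):ℝ)) * t1 + (q k:ℝ) * t2 + d
  · rw [hk.neg_one_pow] at t1 d
    rw [hk.add_one.neg_one_pow] at t2
    linear_combination ((q (k+1):ℝ)) * t1 - (q k:ℝ) * t2 - d

set_option maxHeartbeats 1000000 in
include hirr h0 h1 hx0 ha hx hq0 hq1 hqr in
theorem best : ∀ k, ∀ i j : ℤ, 1 ≤ i → i < (q (k+1):ℤ) → i ≠ (q k:ℤ) →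
    (∏ l ∈ Finset.range (k+1), x l) < |(i:ℝ)*α - (j:ℝ)| := by
  intro k i j hi1 hiq hne
  have hP0pos := prodX_pos hirr h0 h1 hx0 ha hx k
  have hP1pos := prodX_pos hirr h0 h1 hx0 ha hx (k+1)
  have hq0' : (1:ℤ) ≤ (q k : ℤ) := by exact_mod_cast q_pos hirr h0 h1 hx0 ha hx hq0 hq1 hqr k
  have hq1' : (1:ℤ) ≤ (q (k+1) : ℤ) := by exact_mod_cast q_pos hirr h0 h1 hx0 ha hx hq0 hq1 hqr (k+1)
  have d := det_eq hq0 hqr k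
  have hε2 : ((-1:ℤ)^k) * ((-1:ℤ)^k) = 1 := by
    rw [← pow_add]; exact Even.neg_one_pow ⟨k, rfl⟩
  obtain ⟨u, v, hiuv, hjuv⟩ : ∃ u v : ℤ, u * (q k:ℤ) + v * (q (k+1):ℤ) = i ∧
      u * pnum a k + v * pnum a (k+1) = j := by
    refine ⟨(-1:ℤ)^k * (pnum a (k+1) * i - (q (k+1):ℤ) * j),
           (-1:ℤ)^k * ((q k:ℤ) * j - pnum a k * i), ?_, ?_⟩
    · linear_combination ((-1:ℤ)^k*i)*d + i*hε2
    · linear_combination ((-1:ℤ)^k*j)*d + j*hε2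
  have c1 : (u:ℝ) * (q k:ℝ) + (v:ℝ) * (q (k+1):ℝ) = (i:ℝ) := by exact_mod_cast congrArg (fun z : ℤ => (z:ℝ)) hiuv
  have c2 : (u:ℝ) * (pnum a k : ℝ) + (v:ℝ) * (pnum a (k+1) : ℝ) = (j:ℝ) := by exact_mod_cast congrArg (fun z : ℤ => (z:ℝ)) hjuv
  have t1 := theta_eq hirr h0 h1 hx0 ha hx hq0 hq1 hqr k
  have t2 := theta_eq hirr h0 h1 hx0 ha hx hq0 hq1 hqr (k+1)
  have hreal : (i:ℝ)*α - (j:ℝ) = (u:ℝ) * ((q k:ℝ)*α - (pnum a k:ℝ)) + (v:ℝ) * ((q (k+1):ℝ)*α - (pnum a (k+1):ℝ)) := by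
    linear_combination c2 - α * c1
  set P0 := ∏ l ∈ Finset.range (k+1), x l with hP0def
  set P1 := ∏ l ∈ Finset.range (k+1+1), x l with hP1def
  have key : ∀ w : ℝ, w = (u:ℝ) * P0 - (v:ℝ) * P1 → P0 < |w| := by
    intro w hw
    rcases lt_trichotomy v 0 with hv1 | hv0 | hv1
    · -- v ≤ -1, so u ≥ 1
      have hvle : v ≤ -1 := by omega
      have hu1 : 1 ≤ u := by
        by_contra hcon
        push_neg at hcon
        have e1 : u * (q k:ℤ) ≤ 0 :=
          mul_nonpos_iff.mpr (Or.inr ⟨by omega, by omega⟩)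
        have e2 : v * (q (k+1):ℤ) ≤ -1 * (q (k+1):ℤ) :=
          mul_le_mul_of_nonneg_right hvle (by omega)
        omega
      have hur : (1:ℝ) ≤ (u:ℝ) := by exact_mod_cast hu1
      have hvr : (v:ℝ) ≤ -1 := by exact_mod_cast hvle
      have hge : P0 + P1 ≤ w := by rw [hw]; nlinarith
      calc P0 < P0 + P1 := by linarith
        _ ≤ w := hge
        _ ≤ |w| := le_abs_self w
    · -- v = 0
      rw [hv0, zero_mul, add_zero] at hiuv
      have hu1 : 1 ≤ u := by
        by_contra hcon
        push_neg at hcon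
        have e1 : u * (q k:ℤ) ≤ 0 :=
          mul_nonpos_iff.mpr (Or.inr ⟨by omega, by omega⟩)
        omega
      have hune : u ≠ 1 := by
        intro h1'
        rw [h1', one_mul] at hiuv
        exact hne hiuv.symm
      have hu2 : 2 ≤ u := by omega
      have hur : (2:ℝ) ≤ (u:ℝ) := by exact_mod_cast hu2
      have hge : 2 * P0 ≤ w := by
        rw [hw, hv0]; push_cast; nlinarith
      calc P0 < 2 * P0 := by linarith
        _ ≤ w := hge
        _ ≤ |w| := le_abs_self w
    · -- v ≥ 1, so u ≤ -1
      have hvge : 1 ≤ v := hv1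
      have hu1 : u ≤ -1 := by
        by_contra hcon
        push_neg at hcon
        have e1 : 0 ≤ u * (q k:ℤ) := mul_nonneg (by omega) (by omega)
        have e2 : 1 * (q (k+1):ℤ) ≤ v * (q (k+1):ℤ) :=
          mul_le_mul_of_nonneg_right hvge (by omega)
        omega
      have hur : (u:ℝ) ≤ -1 := by exact_mod_cast hu1
      have hvr : (1:ℝ) ≤ (v:ℝ) := by exact_mod_cast hvge
      have hwle : w ≤ -(P0 + P1) := by rw [hw]; nlinarith
      calc P0 < P0 + P1 := by linarith
        _ ≤ -w := by linarith
        _ ≤ |w| := neg_le_abs w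
  rcases Nat.even_or_odd k with hk | hk
  · rw [hk.neg_one_pow] at t1; rw [hk.add_one.neg_one_pow] at t2
    rw [t1, t2] at hreal
    exact key ((i:ℝ)*α - (j:ℝ)) (by linarith)
  · rw [hk.neg_one_pow] at t1; rw [hk.add_one.neg_one_pow] at t2
    rw [t1, t2] at hreal
    have hneg : -((i:ℝ)*α - (j:ℝ)) = (u:ℝ) * P0 - (v:ℝ) * P1 := by linarith
    have h := key (-((i:ℝ)*α - (j:ℝ))) hneg
    rwa [abs_neg] at h

set_option maxHeartbeats 1000000 in
include hirr h0 h1 hx0 ha hx hq0 hq1 hqr in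
theorem floor_shift : ∀ k, ∀ i : ℕ, 1 ≤ i → i < q (k+1) →
    ⌊((q k + i : ℕ):ℝ) * α⌋ = pnum a k + ⌊(i:ℝ)*α⌋ := by
  intro k i hi1 hiq
  have hP0pos := prodX_pos hirr h0 h1 hx0 ha hx k
  have hP1pos := prodX_pos hirr h0 h1 hx0 ha hx (k+1)
  have hqk := q_pos hirr h0 h1 hx0 ha hx hq0 hq1 hqr k
  have hone := oneid hirr h0 h1 hx0 ha hx hq0 hq1 hqr k
  have t1 := theta_eq hirr h0 h1 hx0 ha hx hq0 hq1 hqr k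
  set P0 := ∏ l ∈ Finset.range (k+1), x l with hP0def
  have hP1eq : ∏ l ∈ Finset.range (k+2), x l = P0 * x (k+1) := by
    rw [hP0def, Finset.prod_range_succ]
  have hbnd : -P0 ≤ (q k:ℝ)*α - (pnum a k:ℝ) ∧ (q k:ℝ)*α - (pnum a k:ℝ) ≤ P0 := by
    rcases Nat.even_or_odd k with hk | hk
    · rw [t1, hk.neg_one_pow, one_mul]; exact ⟨by linarith, le_refl _⟩
    · rw [t1, hk.neg_one_pow, neg_one_mul]; exact ⟨le_refl _, by linarith⟩
  have hsplit : ((q k + i : ℕ):ℝ) * α = ((i:ℝ)*α + ((q k:ℝ)*α - (pnum a k:ℝ))) + ((pnum a k : ℤ):ℝ) := by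
    push_cast; ring
  rw [hsplit, Int.floor_add_intCast]
  have hfl : ⌊(i:ℝ)*α + ((q k:ℝ)*α - (pnum a k:ℝ))⌋ = ⌊(i:ℝ)*α⌋ := by
    by_cases hcase : (i:ℤ) = (q k:ℤ)
    · -- i = q k
      have hieq : i = q k := by exact_mod_cast hcase
      have hq2 : 2 ≤ q (k+1) := by omega
      have hq2r : (2:ℝ) ≤ (q (k+1):ℝ) := by exact_mod_cast hq2
      have hx1 := xprop hirr h0 h1 hx0 ha hx (k+1)
      have hqkr : (1:ℝ) ≤ (q k:ℝ) := by exact_mod_cast hqk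
      have h2P : 2*P0 < 1 := by
        rw [hP1eq] at hone
        have e1 : 2*P0 ≤ (q (k+1):ℝ)*P0 := mul_le_mul_of_nonneg_right hq2r (le_of_lt hP0pos)
        have e2 : 0 < (q k:ℝ) * (P0 * x (k+1)) :=
          mul_pos (by linarith) (mul_pos hP0pos hx1.2.1)
        linarith
      have hir : (i:ℝ) = (q k:ℝ) := by exact_mod_cast hieq
      rcases Nat.even_or_odd k with hk | hk
      · have heq : (q k:ℝ)*α = (pnum a k:ℝ) + P0 := by
          rw [hk.neg_one_pow, one_mul] at t1; linarith
        have f1 : ⌊(i:ℝ)*α + ((q k:ℝ)*α - (pnum a k:ℝ))⌋ = pnum a k := by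
          rw [Int.floor_eq_iff]
          constructor
          · rw [hir]; linarith
          · rw [hir]; push_cast; linarith
        have f2 : ⌊(i:ℝ)*α⌋ = pnum a k := by
          rw [Int.floor_eq_iff]
          constructor
          · rw [hir]; linarith
          · rw [hir]; push_cast; linarith
        rw [f1, f2]
      · have heq : (q k:ℝ)*α = (pnum a k:ℝ) - P0 := by
          rw [hk.neg_one_pow, neg_one_mul] at t1; linarith
        have f1 : ⌊(i:ℝ)*α + ((q k:ℝ)*α - (pnum a k:ℝ))⌋ = pnum a k - 1 := by
          rw [Int.floor_eq_iff]
          constructor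
          · rw [hir]; push_cast; linarith
          · rw [hir]; push_cast; linarith
        have f2 : ⌊(i:ℝ)*α⌋ = pnum a k - 1 := by
          rw [Int.floor_eq_iff]
          constructor
          · rw [hir]; push_cast; linarith
          · rw [hir]; push_cast; linarith
        rw [f1, f2]
    · -- i ≠ q k
      have hiz1 : (1:ℤ) ≤ (i:ℤ) := by exact_mod_cast hi1
      have hizq : (i:ℤ) < (q (k+1):ℤ) := by exact_mod_cast hiq
      have b1 := best hirr h0 h1 hx0 ha hx hq0 hq1 hqr k (i:ℤ) ⌊(i:ℝ)*α⌋ hiz1 hizq hcase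
      have b2 := best hirr h0 h1 hx0 ha hx hq0 hq1 hqr k (i:ℤ) (⌊(i:ℝ)*α⌋ + 1) hiz1 hizq hcase
      rw [show (((i:ℤ):ℝ)) = (i:ℝ) by push_cast; ring] at b1 b2
      have hfle : ((⌊(i:ℝ)*α⌋:ℤ):ℝ) ≤ (i:ℝ)*α := Int.floor_le _
      have hflt : (i:ℝ)*α < ((⌊(i:ℝ)*α⌋:ℤ):ℝ) + 1 := Int.lt_floor_add_one _
      have hb1 : P0 < (i:ℝ)*α - ((⌊(i:ℝ)*α⌋:ℤ):ℝ) := by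
        rwa [abs_of_nonneg (by linarith)] at b1
      have hb2 : P0 < ((⌊(i:ℝ)*α⌋:ℤ):ℝ) + 1 - (i:ℝ)*α := by
        rw [abs_of_nonpos (by push_cast; linarith)] at b2
        push_cast at b2 ⊢
        linarith
      rw [Int.floor_eq_iff]
      constructor
      · linarith [hbnd.1]
      · push_cast; linarith [hbnd.2]
  rw [hfl]; ring
include hirr h0 h1 hx0 ha hx hq0 hq1 hqr in
theorem cword_split : ∀ k n, q k + n < q (k+1) →
    cword α (q k + n) = cword α (q k) ++ cword α n := by
  intro k n hqn
  have hqk := q_pos hirr h0 h1 hx0 ha hx hq0 hq1 hqr k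
  unfold cword
  rw [List.range_add, List.map_append, List.map_map]
  congr 1
  refine List.map_congr_left ?_
  intro j hj
  rw [List.mem_range] at hj
  show cseq α (q k + j + 1) = cseq α (j + 1)
  have f1 := floor_shift hirr h0 h1 hx0 ha hx hq0 hq1 hqr k (j+1) (by omega) (by omega)
  have f2 := floor_shift hirr h0 h1 hx0 ha hx hq0 hq1 hqr k (j+2) (by omega) (by omega)
  unfold cseq
  have e1 : ((q k + j + 1 : ℕ):ℝ) = ((q k + (j+1) : ℕ):ℝ) := by push_cast; ring
  have e2 : ((q k + j + 1 : ℕ):ℝ) + 1 = ((q k + (j+2) : ℕ):ℝ) := by push_cast; ring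
  have e3 : ((j+1:ℕ):ℝ) + 1 = ((j+2:ℕ):ℝ) := by push_cast; ring
  rw [e2, e1, e3, f1, f2]
  have e4 : ((j+2:ℕ):ℝ) = ((j+1:ℕ):ℝ) + 1 := by push_cast; ring
  rw [e4]
  ring

include hirr h0 h1 hx0 ha hx hq0 hq1 hqr in
theorem helper0 : ∀ n, n < q 1 → cword α n = (List.replicate n (cword α (q 0))).flatten := by
  intro n
  induction n with
  | zero => intro _; simp [cword]
  | succ n ihn =>
    intro hlt
    have hsplit := cword_split hirr h0 h1 hx0 ha hx hq0 hq1 hqr 0 n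
      (by show q 0 + n < q 1; omega)
    have e : n + 1 = q 0 + n := by omega
    rw [List.replicate_succ, List.flatten_cons, ← ihn (by omega), ← hsplit, ← e]

include hirr h0 h1 hx0 ha hx hq0 hq1 hqr in
theorem helper2 : ∀ k n r, n * q (k+1) + r < q (k+2) →
    cword α (n * q (k+1) + r) =
      (List.replicate n (cword α (q (k+1)))).flatten ++ cword α r := by
  intro k n
  induction n with
  | zero => intro r _; simp
  | succ n ihn =>
    intro r hlt
    have hq1p := q_pos hirr h0 h1 hx0 ha hx hq0 hq1 hqr (k+1)
    have e : (n+1) * q (k+1) + r = q (k+1) + (n * q (k+1) + r) := by ring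
    have hsplit := cword_split hirr h0 h1 hx0 ha hx hq0 hq1 hqr (k+1) (n * q (k+1) + r)
      (by show q (k+1) + (n * q (k+1) + r) < q (k+2); omega)
    rw [e, hsplit, ihn r (by omega), List.replicate_succ, List.flatten_cons, List.append_assoc]

include hirr h0 h1 hx0 ha hx hq0 hq1 hqr in
theorem key : ∀ t (z : ℕ → ℕ) (m : ℕ), m = ∑ i ∈ Finset.range (t+1), z i * q i →
    (∀ j, j ≤ t → (∑ i ∈ Finset.range (j+1), z i * q i) < q (j+1)) →
    cword α m = (((List.range (t+1)).reverse.map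
      fun i => (List.replicate (z i) (cword α (q i))).flatten).flatten) := by
  intro t
  induction t with
  | zero =>
    intro z m hsum hg
    have hm : m = z 0 := by simpa [hq0] using hsum
    have hlt : m < q 1 := by
      have h' := hg 0 (le_refl 0)
      simp [hq0] at h'
      omega
    rw [hm] at hlt ⊢
    simpa [List.range_succ] using helper0 hirr h0 h1 hx0 ha hx hq0 hq1 hqr (z 0) hlt
  | succ t ih =>
    intro z m hsum hg
    have hsum2 : m = z (t+1) * q (t+1) + ∑ i ∈ Finset.range (t+1), z i * q i := by
      rw [hsum, Finset.sum_range_succ]; ring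
    have hlt2 : z (t+1) * q (t+1) + (∑ i ∈ Finset.range (t+1), z i * q i) < q (t+2) := by
      have h' := hg (t+1) (le_refl _)
      rw [Finset.sum_range_succ] at h'
      have e : q (t+1+1) = q (t+2) := rfl
      omega
    have hrec := helper2 hirr h0 h1 hx0 ha hx hq0 hq1 hqr t (z (t+1))
      (∑ i ∈ Finset.range (t+1), z i * q i) hlt2
    have hih := ih z (∑ i ∈ Finset.range (t+1), z i * q i) rfl
      (fun j hj => hg j (by omega))
    rw [hsum2, hrec, hih]
    conv_rhs => rw [List.range_succ]
    simp

end
end BrownAux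

/-- Brown's Decomposition: if `m = z_t q_t + ⋯ + z₀ q₀` is the greedy (Ostrowski) expansion
of `m` (equivalently, every partial sum `z_j q_j + ⋯ + z₀ q₀` is `< q_{j+1}`), then
`C_m = (C_{q_t})^{z_t} ⬝ (C_{q_{t-1}})^{z_{t-1}} ⬝ ⋯ ⬝ (C_{q_0})^{z_0}`. -/
theorem stmt12 (α : ℝ) (hirr : Irrational α) (h0 : 0 < α) (h1 : α < 1)
    (a : ℕ → ℕ) (x : ℕ → ℝ) (q : ℕ → ℕ)
    (hx0 : x 0 = α)
    (ha : ∀ i, (a (i + 1) : ℤ) = ⌊1 / x i⌋)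
    (hx : ∀ i, x (i + 1) = 1 / x i - (a (i + 1) : ℝ))
    (hq0 : q 0 = 1) (hq1 : q 1 = a 1)
    (hqr : ∀ i, q (i + 2) = a (i + 2) * q (i + 1) + q i)
    (m t : ℕ) (z : ℕ → ℕ) (hm : 0 < m)
    (hsum : m = ∑ i ∈ Finset.range (t + 1), z i * q i)
    (hgreedy : ∀ j, j ≤ t → (∑ i ∈ Finset.range (j + 1), z i * q i) < q (j + 1)) :
    cword α m =
      (((List.range (t + 1)).reverse.map
        fun i => (List.replicate (z i) (cword α (q i))).flatten).flatten) := by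
  exact BrownAux.key hirr h0 h1 hx0 ha hx hq0 hq1 hqr t z m hsum hgreedy
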